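/- arXiv:1403.6076 — 2 statements merged into one kernel-verified Lean document; each statement's English description precedes it below -/
import Mathlib

section
/- Let u₀ > 0 and α > 0 be real numbers, and let u : [0,∞) → [0,∞) be a continuous function such that u(t) ≤ u₀ + α · ∫₀ᵗ u(s)² ds for all t ≥ 0. Then u(t) ≤ u₀ / (1 − α·u₀·t) for all t with 0 ≤ t < 1/(α·u₀). -/
/-- Grönwall–Bellman–Bihari integral inequality (Lemma 5.3). -/
theorem bihari_inequality (u₀ α : ℝ) (hu₀ : 0 < u₀) (hα : 0 < α)
    (u : ℝ → ℝ) (hcont : ContinuousOn u (Set.Ici 0))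
    (hnonneg : ∀ t, 0 ≤ t → 0 ≤ u t)
    (hineq : ∀ t, 0 ≤ t → u t ≤ u₀ + α * ∫ s in (0:ℝ)..t, (u s) ^ 2) :
    ∀ t, 0 ≤ t → t < 1 / (α * u₀) → u t ≤ u₀ / (1 - α * u₀ * t) := by
  intro T hT hT'
  set w : ℝ → ℝ := fun t => u (max t 0) with hw
  have hwc : Continuous w := by
    apply hcont.comp_continuous (continuous_id.max continuous_const)
    intro x; exact le_max_right x 0
  have hwnn : ∀ t, 0 ≤ w t := fun t => hnonneg _ (le_max_right t 0)
  have hweq : ∀ t, 0 ≤ t → w t = u t := by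
    intro t ht; simp [hw, max_eq_left ht]
  have hint : ∀ t, 0 ≤ t → (∫ s in (0:ℝ)..t, (w s) ^ 2) = ∫ s in (0:ℝ)..t, (u s) ^ 2 := by
    intro t ht
    apply intervalIntegral.integral_congr
    intro s hs
    rw [Set.uIcc_of_le ht] at hs
    simp only [hweq s hs.1]
  set v : ℝ → ℝ := fun t => u₀ + α * ∫ s in (0:ℝ)..t, (w s) ^ 2 with hv
  have hvderiv : ∀ t, HasDerivAt v (α * (w t) ^ 2) t := by
    intro t
    have h1 : HasDerivAt (fun t => ∫ s in (0:ℝ)..t, (w s) ^ 2) ((w t) ^ 2) t :=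
      intervalIntegral.integral_hasDerivAt_right
        ((hwc.pow 2).intervalIntegrable 0 t)
        ((hwc.pow 2).stronglyMeasurableAtFilter _ _)
        (hwc.pow 2).continuousAt
    exact (h1.const_mul α).const_add u₀
  have hvpos : ∀ t, 0 ≤ t → 0 < v t := by
    intro t ht
    have h0 : 0 ≤ ∫ s in (0:ℝ)..t, (w s) ^ 2 :=
      intervalIntegral.integral_nonneg ht (fun s _ => sq_nonneg _)
    have := mul_nonneg hα.le h0
    simp only [hv]; linarith
  have huv : ∀ t, 0 ≤ t → u t ≤ v t := by
    intro t ht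
    simp only [hv]
    rw [hint t ht]
    exact hineq t ht
  set g : ℝ → ℝ := fun t => (v t)⁻¹ + α * t with hg
  have hgd : ∀ t, 0 ≤ t → HasDerivAt g (-(α * (w t) ^ 2) / (v t) ^ 2 + α) t := by
    intro t ht
    have h1 : HasDerivAt (fun y => (v y)⁻¹) (-(α * (w t) ^ 2) / (v t) ^ 2) t :=
      (hvderiv t).inv (hvpos t ht).ne'
    have h2 : HasDerivAt (fun y : ℝ => α * y) α t := by
      simpa using (hasDerivAt_id t).const_mul α
    exact h1.add h2
  have hgderiv_nonneg : ∀ t, 0 ≤ t → 0 ≤ -(α * (w t) ^ 2) / (v t) ^ 2 + α := by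
    intro t ht
    have hwt : w t ≤ v t := by rw [hweq t ht]; exact huv t ht
    have hsq : (w t) ^ 2 ≤ (v t) ^ 2 := by
      apply pow_le_pow_left₀ (hwnn t) hwt
    have hv2 : (0:ℝ) < (v t) ^ 2 := pow_pos (hvpos t ht) 2
    rw [div_add' _ _ _ hv2.ne', le_div_iff₀ hv2]
    nlinarith
  have hmono : MonotoneOn g (Set.Icc 0 T) := by
    apply monotoneOn_of_deriv_nonneg (convex_Icc 0 T)
    · intro x hx
      exact (hgd x hx.1).continuousAt.continuousWithinAt
    · intro x hx
      rw [interior_Icc] at hx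
      exact (hgd x hx.1.le).differentiableAt.differentiableWithinAt
    · intro x hx
      rw [interior_Icc] at hx
      rw [(hgd x hx.1.le).deriv]
      exact hgderiv_nonneg x hx.1.le
  have hg0 : g 0 = u₀⁻¹ := by simp [hg, hv]
  have hkey : u₀⁻¹ ≤ (v T)⁻¹ + α * T := by
    rw [← hg0]
    exact hmono (Set.left_mem_Icc.mpr hT) (Set.mem_Icc.mpr ⟨hT, le_refl T⟩) hT
  have hden : 0 < 1 - α * u₀ * T := by
    have hαu : 0 < α * u₀ := mul_pos hα hu₀
    have := (lt_div_iff₀ hαu).mp (by rwa [one_div] at hT' ⊢)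
    linarith
  have hvTinv : (1 - α * u₀ * T) / u₀ ≤ (v T)⁻¹ := by
    have heq : (1 - α * u₀ * T) / u₀ = u₀⁻¹ - α * T := by
      field_simp
    rw [heq]
    linarith
  have hvT : v T ≤ u₀ / (1 - α * u₀ * T) := by
    have hpos : 0 < (1 - α * u₀ * T) / u₀ := div_pos hden hu₀
    have h1 : ((v T)⁻¹)⁻¹ ≤ ((1 - α * u₀ * T) / u₀)⁻¹ :=
      inv_anti₀ hpos hvTinv
    rwa [inv_inv, inv_div] at h1
  exact le_trans (huv T hT) hvT
end

section
/- Let n ≥ 2, r ≥ 1, and let U ⊆ ℂⁿ be an open set contained in {λ ∈ ℂⁿ : λᵢ ≠ λⱼ for all i ≠ j}. Let A₁, …, Aₙ : U → M_r(ℂ) be functions admitting partial derivatives in each coordinate at every point of U, satisfying the Schlesinger equations on U: ∂_{λⱼ}Aᵢ = [Aᵢ, Aⱼ]/(λᵢ − λⱼ) for all i ≠ j, and ∂_{λᵢ}Aᵢ = −Σ_{j≠i} [Aᵢ, Aⱼ]/(λᵢ − λⱼ) for each i. Define ω_k : U → ℂ by ω_k(λ) = Σ_{i≠k} Tr(Aᵢ(λ)A_k(λ))/(λ_k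 − λᵢ). Then the 1-form ω = Σ_k ω_k dλ_k is closed: ∂_{λⱼ}ω_k(λ) = ∂_{λ_k}ω_j(λ) for all j, k and all λ ∈ U. -/
open Matrix Finset

attribute [local instance] Matrix.normedAddCommGroup Matrix.normedSpace

/-- The Jimbo–Miwa–Ueno 1-form coefficient
`ω_k(λ) = Σ_{i ≠ k} Tr(Aᵢ(λ)A_k(λ))/(λ_k − λᵢ)`. -/
noncomputable def jmuOmega (n r : ℕ)
    (A : Fin n → (Fin n → ℂ) → Matrix (Fin r) (Fin r) ℂ)
    (k : Fin n) (lam : Fin n → ℂ) : ℂ :=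
  ∑ i ∈ univ.filter (· ≠ k), (lam k - lam i)⁻¹ * (A i lam * A k lam).trace

namespace JMUAux

variable {n r : ℕ}


noncomputable def schDer (x : Fin n → ℂ) (a : Fin n → Matrix (Fin r) (Fin r) ℂ)
    (j i : Fin n) : Matrix (Fin r) (Fin r) ℂ :=
  if i = j then
    -(∑ l ∈ univ.filter (· ≠ j), (x j - x l)⁻¹ • (a j * a l - a l * a j))
  else (x i - x j)⁻¹ • (a i * a j - a j * a i)

lemma entry_hasDerivAt {F : ℂ → Matrix (Fin r) (Fin r) ℂ} {M : Matrix (Fin r) (Fin r) ℂ}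
    (h : HasDerivAt F M 0) (a b : Fin r) :
    HasDerivAt (fun t => F t a b) (M a b) 0 := by
  let L : Matrix (Fin r) (Fin r) ℂ →ₗ[ℂ] ℂ :=
    { toFun := fun X => X a b
      map_add' := fun _ _ => rfl
      map_smul' := fun _ _ => rfl }
  exact (LinearMap.toContinuousLinearMap L).hasFDerivAt.comp_hasDerivAt 0 h

lemma traceMul_hasDerivAt {F G : ℂ → Matrix (Fin r) (Fin r) ℂ} {M N : Matrix (Fin r) (Fin r) ℂ}
    (hF : HasDerivAt F M 0) (hG : HasDerivAt G N 0) :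
    HasDerivAt (fun t => (F t * G t).trace) ((M * G 0 + F 0 * N).trace) 0 := by
  have key : HasDerivAt
      (fun t => ∑ p ∈ (univ : Finset (Fin r × Fin r)), F t p.1 p.2 * G t p.2 p.1)
      (∑ p ∈ (univ : Finset (Fin r × Fin r)),
        (M p.1 p.2 * G 0 p.2 p.1 + F 0 p.1 p.2 * N p.2 p.1)) 0 :=
    HasDerivAt.fun_sum fun p _ => (entry_hasDerivAt hF p.1 p.2).mul (entry_hasDerivAt hG p.2 p.1)
  have h1 : ∀ (X Y : Matrix (Fin r) (Fin r) ℂ),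
      (X * Y).trace = ∑ p ∈ (univ : Finset (Fin r × Fin r)), X p.1 p.2 * Y p.2 p.1 := by
    intro X Y
    rw [← Finset.univ_product_univ, Finset.sum_product]
    simp [Matrix.trace, Matrix.diag, Matrix.mul_apply]
  have e1 : (fun t => (F t * G t).trace)
      = fun t => ∑ p ∈ (univ : Finset (Fin r × Fin r)), F t p.1 p.2 * G t p.2 p.1 :=
    funext fun t => h1 _ _
  rw [e1, show (M * G 0 + F 0 * N).trace
      = ∑ p ∈ (univ : Finset (Fin r × Fin r)),
        (M p.1 p.2 * G 0 p.2 p.1 + F 0 p.1 p.2 * N p.2 p.1) by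
    rw [Matrix.trace_add, h1, h1, Finset.sum_add_distrib]]
  exact key


lemma omega_hasDerivAt
    (U : Set (Fin n → ℂ))
    (hUsub : U ⊆ {lam : Fin n → ℂ | ∀ i j, i ≠ j → lam i ≠ lam j})
    (A : Fin n → (Fin n → ℂ) → Matrix (Fin r) (Fin r) ℂ)
    (hoff : ∀ lam ∈ U, ∀ i j : Fin n, i ≠ j →
      HasDerivAt (fun t : ℂ => A i (lam + t • (Pi.single j 1 : Fin n → ℂ)))
        ((lam i - lam j)⁻¹ • (A i lam * A j lam - A j lam * A i lam)) 0)
    (hdiag : ∀ lam ∈ U, ∀ i : Fin n,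
      HasDerivAt (fun t : ℂ => A i (lam + t • (Pi.single i 1 : Fin n → ℂ)))
        (-(∑ j ∈ univ.filter (· ≠ i),
            (lam i - lam j)⁻¹ • (A i lam * A j lam - A j lam * A i lam))) 0)
    (lam : Fin n → ℂ) (hlam : lam ∈ U) (j k : Fin n) :
    HasDerivAt (fun t : ℂ => jmuOmega n r A k (lam + t • (Pi.single j 1 : Fin n → ℂ)))
      (∑ i ∈ univ.filter (· ≠ k),
        (-((Pi.single j 1 : Fin n → ℂ) k - (Pi.single j 1 : Fin n → ℂ) i) / (lam k - lam i) ^ 2 * (A i lam * A k lam).trace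
          + (lam k - lam i)⁻¹ *
            (schDer lam (fun m => A m lam) j i * A k lam
              + A i lam * schDer lam (fun m => A m lam) j k).trace)) 0 := by
  have hA : ∀ m : Fin n,
      HasDerivAt (fun t : ℂ => A m (lam + t • (Pi.single j 1 : Fin n → ℂ)))
        (schDer lam (fun p => A p lam) j m) 0 := by
    intro m
    by_cases hmj : m = j
    · subst hmj
      simpa [schDer] using hdiag lam hlam m
    · simpa [schDer, hmj] using hoff lam hlam m j hmj
  unfold jmuOmega
  apply HasDerivAt.fun_sum
  intro i hi
  have hik : i ≠ k := by simpa using (Finset.mem_filter.mp hi).2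
  have hx : lam k - lam i ≠ 0 := sub_ne_zero.mpr (hUsub hlam k i (Ne.symm hik))
  set e : Fin n → ℂ := Pi.single j 1 with he
  have hu : HasDerivAt (fun t : ℂ => (lam + t • e) k - (lam + t • e) i) (e k - e i) 0 := by
    have h1 : HasDerivAt (fun t : ℂ => lam k + t * e k) (e k) 0 := by
      simpa using (((hasDerivAt_id (0:ℂ)).mul_const (e k)).const_add (lam k))
    have h2 : HasDerivAt (fun t : ℂ => lam i + t * e i) (e i) 0 := by
      simpa using (((hasDerivAt_id (0:ℂ)).mul_const (e i)).const_add (lam i))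
    exact h1.sub h2
  have hu0 : (lam + (0:ℂ) • e) k - (lam + (0:ℂ) • e) i = lam k - lam i := by simp
  have hinv := hu.fun_inv (by rw [hu0]; exact hx)
  have hprod := hinv.fun_mul (traceMul_hasDerivAt (hA i) (hA k))
  have : (lam + (0:ℂ) • e) = lam := by simp
  rw [this] at hprod
  exact hprod


lemma sum_eq (x : Fin n → ℂ) (a : Fin n → Matrix (Fin r) (Fin r) ℂ)
    (hx : ∀ i j : Fin n, i ≠ j → x i ≠ x j) (j k : Fin n) (hjk : j ≠ k) :
    ∑ i ∈ univ.filter (· ≠ k),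
      (-((Pi.single j 1 : Fin n → ℂ) k - (Pi.single j 1 : Fin n → ℂ) i) / (x k - x i) ^ 2
          * (a i * a k).trace
        + (x k - x i)⁻¹ * (schDer x a j i * a k + a i * schDer x a j k).trace)
    = ((x k - x j) ^ 2)⁻¹ * (a j * a k).trace := by
  have hkj : k ≠ j := Ne.symm hjk
  have hxkj : x k - x j ≠ 0 := sub_ne_zero.mpr (hx k j hkj)
  set t : Finset (Fin n) := univ.filter (fun i => i ≠ k ∧ i ≠ j) with ht
  have hjmem : j ∈ univ.filter (· ≠ k) := by simp [hjk]
  rw [← Finset.add_sum_erase _ _ hjmem]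
  have herase : (univ.filter (· ≠ k : Fin n → Prop)).erase j = t := by
    ext i; simp [ht, and_comm]
  rw [herase]
  -- the trace of a_j * schDer j k vanishes
  have tr2 : (a j * schDer x a j k).trace = 0 := by
    rw [schDer, if_neg hkj, mul_smul_comm, trace_smul]
    have h0 : (a j * (a k * a j - a j * a k)).trace = 0 := by
      rw [Matrix.mul_sub, trace_sub, ← mul_assoc, ← mul_assoc,
        Matrix.trace_mul_cycle (a j) (a k) (a j), sub_self]
    rw [h0, smul_zero]
  -- the trace of schDer j j * a_k
  have tr1 : (schDer x a j j * a k).trace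
      = -∑ i ∈ t, (x j - x i)⁻¹ * ((a j * a i * a k).trace - (a i * a j * a k).trace) := by
    rw [schDer, if_pos rfl, Matrix.neg_mul, trace_neg, Finset.sum_mul]
    have hsum : (∑ l ∈ univ.filter (· ≠ j : Fin n → Prop),
        ((x j - x l)⁻¹ • (a j * a l - a l * a j)) * a k).trace
        = ∑ l ∈ univ.filter (· ≠ j : Fin n → Prop),
          (x j - x l)⁻¹ * ((a j * a l * a k).trace - (a l * a j * a k).trace) := by
      rw [trace_sum]
      refine Finset.sum_congr rfl fun l _ => ?_
      rw [smul_mul_assoc, trace_smul, Matrix.sub_mul, trace_sub, smul_eq_mul]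
    rw [hsum]
    have hkmem : k ∈ univ.filter (· ≠ j : Fin n → Prop) := by simp [hkj]
    rw [← Finset.add_sum_erase _ _ hkmem]
    have herase2 : (univ.filter (· ≠ j : Fin n → Prop)).erase k = t := by
      ext i; simp [ht, and_comm]
    rw [herase2]
    have zk : (a j * a k * a k).trace - (a k * a j * a k).trace = 0 := by
      rw [Matrix.trace_mul_cycle (a j) (a k) (a k), sub_self]
    rw [zk, mul_zero, zero_add]
  -- per-index identity on t
  have h2 : ∀ i ∈ t,
      (-((Pi.single j 1 : Fin n → ℂ) k - (Pi.single j 1 : Fin n → ℂ) i) / (x k - x i) ^ 2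
          * (a i * a k).trace
        + (x k - x i)⁻¹ * (schDer x a j i * a k + a i * schDer x a j k).trace)
      = (x k - x j)⁻¹ *
          ((x j - x i)⁻¹ * ((a j * a i * a k).trace - (a i * a j * a k).trace)) := by
    intro i hit
    have hik : i ≠ k := by simp [ht] at hit; exact hit.1
    have hij : i ≠ j := by simp [ht] at hit; exact hit.2
    have hxki : x k - x i ≠ 0 := sub_ne_zero.mpr (hx k i (Ne.symm hik))
    have hxij : x i - x j ≠ 0 := sub_ne_zero.mpr (hx i j hij)
    have hxji : x j - x i ≠ 0 := sub_ne_zero.mpr (hx j i (Ne.symm hij))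
    rw [Pi.single_eq_of_ne hkj, Pi.single_eq_of_ne hij, sub_zero, neg_zero, zero_div, zero_mul,
      zero_add]
    rw [schDer, if_neg hij, schDer, if_neg hkj]
    rw [smul_mul_assoc, mul_smul_comm, trace_add, trace_smul, trace_smul,
      Matrix.sub_mul, Matrix.mul_sub, trace_sub, trace_sub, smul_eq_mul, smul_eq_mul]
    have e1 : (a i * (a k * a j)).trace = (a j * a i * a k).trace := by
      rw [← mul_assoc, Matrix.trace_mul_cycle (a i) (a k) (a j)]
    have e2 : (a i * (a j * a k)).trace = (a i * a j * a k).trace := by rw [← mul_assoc]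
    rw [e1, e2]
    field_simp
    ring
  rw [Finset.sum_congr rfl h2, ← Finset.mul_sum]
  rw [trace_add, tr1, tr2, add_zero]
  rw [Pi.single_eq_of_ne hkj, Pi.single_eq_same]
  ring


end JMUAux

/-- Closedness of the Jimbo–Miwa–Ueno form: if the `Aᵢ` satisfy the Schlesinger
equations on an open set `U` avoiding the diagonals, then
`∂_{λⱼ} ω_k = ∂_{λ_k} ω_j` at every point of `U` (in particular both partial
derivatives exist). Partial derivatives are taken as complex derivatives at
`t = 0` of `t ↦ F(λ + t·eⱼ)`. -/
theorem jmu_form_closed (n r : ℕ) (hn : 2 ≤ n) (hr : 1 ≤ r)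
    (U : Set (Fin n → ℂ)) (hU : IsOpen U)
    (hUsub : U ⊆ {lam : Fin n → ℂ | ∀ i j, i ≠ j → lam i ≠ lam j})
    (A : Fin n → (Fin n → ℂ) → Matrix (Fin r) (Fin r) ℂ)
    (hoff : ∀ lam ∈ U, ∀ i j : Fin n, i ≠ j →
      HasDerivAt (fun t : ℂ => A i (lam + t • (Pi.single j 1 : Fin n → ℂ)))
        ((lam i - lam j)⁻¹ • (A i lam * A j lam - A j lam * A i lam)) 0)
    (hdiag : ∀ lam ∈ U, ∀ i : Fin n,
      HasDerivAt (fun t : ℂ => A i (lam + t • (Pi.single i 1 : Fin n → ℂ)))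
        (-(∑ j ∈ univ.filter (· ≠ i),
            (lam i - lam j)⁻¹ • (A i lam * A j lam - A j lam * A i lam))) 0) :
    ∀ lam ∈ U, ∀ j k : Fin n, ∃ D : ℂ,
      HasDerivAt
        (fun t : ℂ => jmuOmega n r A k (lam + t • (Pi.single j 1 : Fin n → ℂ))) D 0 ∧
      HasDerivAt
        (fun t : ℂ => jmuOmega n r A j (lam + t • (Pi.single k 1 : Fin n → ℂ))) D 0 := by
  intro lam hlam j k
  have hx : ∀ i j : Fin n, i ≠ j → lam i ≠ lam j := hUsub hlam
  rcases eq_or_ne j k with rfl | hjk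
  · exact ⟨_, JMUAux.omega_hasDerivAt U hUsub A hoff hdiag lam hlam j j,
      JMUAux.omega_hasDerivAt U hUsub A hoff hdiag lam hlam j j⟩
  · refine ⟨((lam k - lam j) ^ 2)⁻¹ * (A j lam * A k lam).trace, ?_, ?_⟩
    · have h := JMUAux.omega_hasDerivAt U hUsub A hoff hdiag lam hlam j k
      rwa [JMUAux.sum_eq lam (fun m => A m lam) hx j k hjk] at h
    · have h := JMUAux.omega_hasDerivAt U hUsub A hoff hdiag lam hlam k j
      rw [JMUAux.sum_eq lam (fun m => A m lam) hx k j (Ne.symm hjk)] at h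
      rw [show ((lam k - lam j) ^ 2)⁻¹ * (A j lam * A k lam).trace
          = ((lam j - lam k) ^ 2)⁻¹ * (A k lam * A j lam).trace by
        rw [Matrix.trace_mul_comm, show (lam k - lam j) ^ 2 = (lam j - lam k) ^ 2 by ring]]
      exact h
end
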